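/- Let R be a UFD containing ℚ and let m, n be relatively prime positive integers. Let D be the R-derivation on R[x,y] given by D = n·x ∂/∂x − m·y ∂/∂y. Then the kernel R[x,y]^D equals R[x^m y^n]. -/
import Mathlib


open MvPolynomial

set_option maxHeartbeats 1000000 in
/-- **Lemma 3.4 (c).** Let `R` be a UFD containing `ℚ` and `m, n` relatively prime positive
integers.  For the derivation `D = n x ∂x - m y ∂y` on `R[x,y]` one has
`R[x,y]^D = R[x^m y^n]`. -/
theorem kernel_of_nx_dx_sub_my_dy
    (R : Type*) [CommRing R] [IsDomain R] [UniqueFactorizationMonoid R] [Algebra ℚ R]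
    (m n : ℕ) (hm : 0 < m) (hn : 0 < n) (hmn : Nat.Coprime m n)
    (D : Derivation R (MvPolynomial (Fin 2) R) (MvPolynomial (Fin 2) R))
    (hD : D = (C (n : R) * X 0 : MvPolynomial (Fin 2) R) • pderiv 0
              - (C (m : R) * X 1 : MvPolynomial (Fin 2) R) • pderiv 1) :
    ∀ f : MvPolynomial (Fin 2) R,
      D f = 0 ↔ f ∈ Algebra.adjoin R {(X 0 ^ m * X 1 ^ n : MvPolynomial (Fin 2) R)} := by
  haveI : CharZero R := charZero_of_injective_algebraMap (algebraMap ℚ R).injective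
  have hXp : ∀ (i : Fin 2) (d : Fin 2 →₀ ℕ) (c : R),
      (X i : MvPolynomial (Fin 2) R) * pderiv i (monomial d c)
        = monomial d (c * (d i : R)) := by
    intro i d c
    rw [pderiv_monomial]
    rcases Nat.eq_zero_or_pos (d i) with h | h
    · simp [h]
    · have hd : Finsupp.single i 1 + (d - Finsupp.single i 1) = d := by
        ext j
        rcases eq_or_ne j i with rfl | hj
        · simp [Finsupp.single_apply]; omega
        · simp [Finsupp.single_apply, Ne.symm hj]
      rw [X, monomial_mul, one_mul, hd]
  have key : ∀ (d : Fin 2 →₀ ℕ) (c : R),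
      D (monomial d c) = monomial d (c * ((n : R) * (d 0) - (m : R) * (d 1))) := by
    intro d c
    rw [hD, Derivation.sub_apply, Derivation.smul_apply, Derivation.smul_apply,
      smul_eq_mul, smul_eq_mul, mul_assoc, mul_assoc, hXp, hXp, C_mul_monomial,
      C_mul_monomial, ← map_sub]
    ring_nf
  have hdecomp : ∀ d : Fin 2 →₀ ℕ, d = Finsupp.single 0 (d 0) + Finsupp.single 1 (d 1) := by
    intro d
    ext j
    fin_cases j <;> simp [Finsupp.single_apply]
  have hmono2 : ∀ (a b : ℕ) (c : R),
      (monomial (Finsupp.single (0 : Fin 2) a + Finsupp.single 1 b) c : MvPolynomial (Fin 2) R)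
        = C c * X 0 ^ a * X 1 ^ b := by
    intro a b c
    rw [monomial_add_single,
      show (Finsupp.single (0 : Fin 2) a) = 0 + Finsupp.single 0 a from (zero_add _).symm,
      monomial_add_single, monomial_zero']
  intro f
  constructor
  · intro hf
    rw [← support_sum_monomial_coeff f]
    refine Subalgebra.sum_mem _ fun d hd => ?_
    have hc : coeff d f ≠ 0 := mem_support_iff.mp hd
    have hDf : coeff d (D f) = coeff d f * ((n : R) * (d 0) - (m : R) * (d 1)) := by
      conv_lhs => rw [← support_sum_monomial_coeff f]
      rw [map_sum, Finset.sum_congr rfl (fun e _ => key e (coeff e f)), coeff_sum,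
        Finset.sum_eq_single d (fun e _ he => by rw [coeff_monomial, if_neg he])
          (fun h => absurd hd h), coeff_monomial, if_pos rfl]
    rw [hf, coeff_zero] at hDf
    have heq : (n : R) * (d 0) - (m : R) * (d 1) = 0 := by
      rcases mul_eq_zero.mp hDf.symm with h1 | h1
      · exact absurd h1 hc
      · exact h1
    have hnat : n * d 0 = m * d 1 := by
      have : ((n * d 0 : ℕ) : R) = ((m * d 1 : ℕ) : R) := by
        push_cast
        linear_combination heq
      exact_mod_cast this
    obtain ⟨k, hk⟩ : m ∣ d 0 := Nat.Coprime.dvd_of_dvd_mul_left hmn ⟨d 1, hnat⟩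
    have hd1 : d 1 = n * k := by
      have : m * d 1 = m * (n * k) := by rw [← hnat, hk]; ring
      exact Nat.eq_of_mul_eq_mul_left hm this
    have hd' : d = Finsupp.single 0 (m * k) + Finsupp.single 1 (n * k) := by
      rw [← hk, ← hd1]; exact hdecomp d
    have hmono : (monomial d (coeff d f) : MvPolynomial (Fin 2) R)
        = C (coeff d f) * ((X 0 ^ m * X 1 ^ n : MvPolynomial (Fin 2) R)) ^ k := by
      rw [hd', hmono2]
      conv_lhs => rw [pow_mul, pow_mul]
      rw [mul_assoc, ← mul_pow]
    rw [hmono]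
    refine mul_mem ?_ (pow_mem (Algebra.subset_adjoin (Set.mem_singleton _)) k)
    rw [← MvPolynomial.algebraMap_eq]
    exact Subalgebra.algebraMap_mem _ _
  · intro hf
    induction hf using Algebra.adjoin_induction with
    | mem x hx =>
      rw [Set.mem_singleton_iff.mp hx]
      have hg : (X 0 ^ m * X 1 ^ n : MvPolynomial (Fin 2) R)
          = monomial (Finsupp.single 0 m + Finsupp.single 1 n) 1 := by
        rw [hmono2, map_one, one_mul]
      rw [hg, key]
      have h0 : ((Finsupp.single (0 : Fin 2) m + Finsupp.single 1 n : Fin 2 →₀ ℕ) 0) = m := by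
        simp [Finsupp.single_apply]
      have h1 : ((Finsupp.single (0 : Fin 2) m + Finsupp.single 1 n : Fin 2 →₀ ℕ) 1) = n := by
        simp [Finsupp.single_apply]
      rw [h0, h1, show (1 : R) * ((n : R) * m - m * n) = 0 by ring, map_zero]
    | algebraMap r => exact D.map_algebraMap r
    | add x y hx hy ihx ihy => rw [map_add, ihx, ihy, add_zero]
    | mul x y hx hy ihx ihy => rw [D.leibniz, ihx, ihy, smul_zero, smul_zero, add_zero]
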